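/- Let X be a normal topological space and Y a path-connected topological space belonging to σAE(X). Then every piecewise continuous map f : X → Y is of the stable first Baire class. -/

import Mathlib

open Set Topology

open scoped Classical

/-- A map `f : X → Y` is *piecewise continuous* if `X` has a countable closed cover
such that the restriction of `f` to each member of the cover is continuous. -/
def PiecewiseContinuous {X Y : Type*} [TopologicalSpace X] [TopologicalSpace Y]
    (f : X → Y) : Prop :=
  ∃ C : Set (Set X), C.Countable ∧ (∀ c ∈ C, IsClosed c) ∧ ⋃₀ C = Set.univ ∧
    ∀ c ∈ C, ContinuousOn f c

/-- A map `f : X → Y` is of the *stable first Baire class* if it is the stable limit of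
a sequence of continuous maps: for every `x` the sequence is eventually equal to `f x`. -/
def StableFirstBaireClass {X Y : Type*} [TopologicalSpace X] [TopologicalSpace Y]
    (f : X → Y) : Prop :=
  ∃ F : ℕ → X → Y, (∀ n, Continuous (F n)) ∧
    ∀ x : X, ∃ n : ℕ, ∀ m ≥ n, F m x = f x

/-- The pair `(Y, B)` is an absolute extensor for `X`: every continuous map from a
closed subspace of `X` into `B` extends to a continuous map from `X` to `Y`. -/
def PairAE (X : Type*) [TopologicalSpace X] {Y : Type*} [TopologicalSpace Y]
    (B : Set Y) : Prop :=
  ∀ (A : Set X), IsClosed A → ∀ g : A → Y, Continuous g → (∀ a : A, g a ∈ B) →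
    ∃ G : X → Y, Continuous G ∧ ∀ a : A, G a = g a

/-- `Y` belongs to `σAE(X)`: `Y` has a countable cover by non-empty closed `Gδ`-sets
`Yₙ` with `(Y, Yₙ) ∈ AE(X)`. -/
def SigmaAE (X : Type*) [TopologicalSpace X] (Y : Type*) [TopologicalSpace Y] : Prop :=
  ∃ Yn : ℕ → Set Y,
    (∀ n, (Yn n).Nonempty ∧ IsClosed (Yn n) ∧ IsGδ (Yn n) ∧ PairAE X (Yn n)) ∧
    (⋃ n, Yn n) = Set.univ

section Aux

variable {X Y : Type*} [TopologicalSpace X] [TopologicalSpace Y]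

/-- Gluing of two continuous maps on closed sets that agree on the intersection. -/
lemma sbc_glue {s t : Set X} {g h : X → Y} (hs : IsClosed s) (ht : IsClosed t)
    (hg : ContinuousOn g s) (hh : ContinuousOn h t)
    (agree : ∀ x ∈ s ∩ t, g x = h x) :
    ContinuousOn (fun x => if x ∈ s then g x else h x) (s ∪ t) := by
  classical
  intro x hx
  set F : X → Y := fun x => if x ∈ s then g x else h x with hF
  have hFs : ∀ z ∈ s, F z = g z := fun z hz => if_pos hz
  have hFt : ∀ z ∈ t, F z = h z := by
    intro z hz
    by_cases hzs : z ∈ s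
    · simp only [F, if_pos hzs]; exact agree z ⟨hzs, hz⟩
    · simp only [F, if_neg hzs]
  have cs : ContinuousWithinAt F s x := by
    by_cases hxs : x ∈ s
    · exact (hg x hxs).congr hFs (hFs x hxs)
    · exact continuousWithinAt_of_notMem_closure (by rwa [hs.closure_eq])
  have ct : ContinuousWithinAt F t x := by
    by_cases hxt : x ∈ t
    · exact (hh x hxt).congr hFt (hFt x hxt)
    · exact continuousWithinAt_of_notMem_closure (by rwa [ht.closure_eq])
  exact cs.union ct

/-- Continuity on the union of two closed sets. -/
lemma sbc_union_same {s t : Set X} {g : X → Y} (hs : IsClosed s) (ht : IsClosed t)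
    (hgs : ContinuousOn g s) (hgt : ContinuousOn g t) :
    ContinuousOn g (s ∪ t) := by
  have := sbc_glue hs ht hgs hgt (fun x _ => rfl)
  have heq : (fun x => if x ∈ s then g x else g x) = g := by
    funext x; by_cases hxs : x ∈ s <;> simp [hxs]
  rwa [heq] at this

/-- Continuity on a finite union of closed sets. -/
lemma sbc_biUnion {g : X → Y} (s : ℕ → Set X) (hcl : ∀ k, IsClosed (s k))
    (hco : ∀ k, ContinuousOn g (s k)) (m : ℕ) :
    ContinuousOn g (⋃ k ∈ Finset.range m, s k) := by
  induction m with
  | zero => simp [continuousOn_empty]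
  | succ n ih =>
      have : (⋃ k ∈ Finset.range (n + 1), s k) = (⋃ k ∈ Finset.range n, s k) ∪ s n := by
        rw [Finset.range_add_one]
        simp [Set.biUnion_insert, Set.union_comm]
      rw [this]
      exact sbc_union_same ((Finset.range n).finite_toSet.isClosed_biUnion fun k _ => hcl k)
        (hcl n) ih (hco n)

/-- A Gδ set is a countable intersection of a sequence of open sets. -/
lemma sbc_gdelta {s : Set Y} (h : IsGδ s) :
    ∃ O : ℕ → Set Y, (∀ i, IsOpen (O i)) ∧ s = ⋂ i, O i := by
  obtain ⟨T, hTo, hTc, rfl⟩ := h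
  rcases T.eq_empty_or_nonempty with rfl | hne
  · exact ⟨fun _ => univ, fun _ => isOpen_univ, by simp⟩
  · obtain ⟨g, rfl⟩ := hTc.exists_eq_range hne
    exact ⟨g, fun i => hTo _ ⟨i, rfl⟩, by rw [sInter_range]⟩

/-- Extension with a prescribed constant value on a disjoint closed set. -/
lemma sbc_ext [NormalSpace X] [PathConnectedSpace Y] {B : Set Y} {A D : Set X} {f : X → Y}
    (hB : B.Nonempty) (hAE : PairAE X B) (hA : IsClosed A) (hD : IsClosed D)
    (hAD : Disjoint A D) (hfA : ContinuousOn f A) (hfB : ∀ x ∈ A, f x ∈ B) (b : Y) :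
    ∃ G : X → Y, Continuous G ∧ (∀ x ∈ A, G x = f x) ∧ (∀ x ∈ D, G x = b) := by
  classical
  obtain ⟨u, hu0, hu1, hu01⟩ := exists_continuous_zero_one_of_isClosed hA hD hAD
  obtain ⟨b₁, hb₁⟩ := hB
  set S : Set X := {x | (1 : ℝ) / 2 ≤ u x} with hS
  have hScl : IsClosed S := isClosed_le continuous_const u.continuous
  have hAS : ∀ x ∈ A, x ∉ S := by
    intro x hx hxS
    have h0 : u x = 0 := hu0 hx
    have : (1 : ℝ) / 2 ≤ u x := hxS
    rw [h0] at this; norm_num at this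
  set g : X → Y := fun x => if x ∈ A then f x else b₁ with hg
  have hgco : ContinuousOn g (A ∪ S) :=
    sbc_glue hA hScl hfA continuousOn_const (fun x hx => absurd hx.2 (hAS x hx.1))
  have hcl : IsClosed (A ∪ S) := hA.union hScl
  have hgB : ∀ a : (A ∪ S : Set X), (A ∪ S).restrict g a ∈ B := by
    rintro ⟨x, hx⟩
    by_cases hxA : x ∈ A
    · simpa [g, hxA, Set.restrict] using hfB x hxA
    · simp [g, hxA, hb₁, Set.restrict]
  obtain ⟨G₀, hG₀c, hG₀⟩ := hAE (A ∪ S) hcl ((A ∪ S).restrict g) hgco.restrict hgB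
  set p : Path b₁ b := (PathConnectedSpace.joined b₁ b).somePath with hp
  refine ⟨fun x => if u x ≤ 1 / 2 then G₀ x else p.extend (2 * u x - 1), ?_, ?_, ?_⟩
  · refine Continuous.if_le hG₀c (p.continuous_extend.comp (by continuity))
      u.continuous continuous_const ?_
    intro x hx
    have hxS : x ∈ S := by simp only [S, mem_setOf_eq, hx]; norm_num
    have hxA : x ∉ A := fun h => hAS x h hxS
    have h1 : G₀ x = b₁ := by
      have := hG₀ ⟨x, Or.inr hxS⟩
      simpa [g, hxA, Set.restrict] using this
    rw [h1, hx]
    have h2 : (2 * ((1 : ℝ) / 2) - 1) = 0 := by norm_num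
    rw [h2, Path.extend_zero]
  · intro x hxA
    have h0 : u x = 0 := hu0 hxA
    beta_reduce
    rw [if_pos (by rw [h0]; norm_num : u x ≤ 1 / 2)]
    have := hG₀ ⟨x, Or.inl hxA⟩
    simpa [g, hxA, Set.restrict] using this
  · intro x hxD
    have h1 : u x = 1 := hu1 hxD
    beta_reduce
    rw [if_neg (by rw [h1]; norm_num : ¬ u x ≤ 1 / 2)]
    rw [h1]
    have h2 : (2 * (1 : ℝ) - 1) = 1 := by norm_num
    rw [h2, Path.extend_one]

/-- Finitely many pairwise disjoint closed sets in a normal space can be separated by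
pairwise disjoint open sets. -/
lemma sbc_disjoint_opens [NormalSpace X] (F : ℕ → Set X) (hcl : ∀ n, IsClosed (F n))
    (hdis : ∀ a b, a ≠ b → Disjoint (F a) (F b)) (m : ℕ) :
    ∃ U : ℕ → Set X, (∀ n, IsOpen (U n)) ∧ (∀ n, F n ⊆ U n) ∧
      ∀ a ≤ m, ∀ b ≤ m, a ≠ b → Disjoint (U a) (U b) := by
  classical
  have sep : ∀ a b : ℕ, ∃ q : Set X × Set X, IsOpen q.1 ∧ IsOpen q.2 ∧ F a ⊆ q.1 ∧
      F b ⊆ q.2 ∧ (a ≠ b → Disjoint q.1 q.2) := by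
    intro a b
    by_cases h : a = b
    · exact ⟨(univ, univ), isOpen_univ, isOpen_univ, subset_univ _, subset_univ _,
        fun h' => absurd h h'⟩
    · obtain ⟨P, Q, hP, hQ, hFP, hFQ, hPQ⟩ := normal_separation (hcl a) (hcl b) (hdis a b h)
      exact ⟨(P, Q), hP, hQ, hFP, hFQ, fun _ => hPQ⟩
  choose q h1 h2 h3 h4 h5 using sep
  refine ⟨fun n => (⋂ b ∈ Finset.range (m + 1), (q n b).1) ∩
      (⋂ a ∈ Finset.range (m + 1), (q a n).2), ?_, ?_, ?_⟩
  · intro n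
    exact (isOpen_biInter_finset fun b _ => h1 n b).inter
      (isOpen_biInter_finset fun a _ => h2 a n)
  · intro n x hx
    exact ⟨mem_iInter₂.mpr fun b _ => h3 n b hx, mem_iInter₂.mpr fun a _ => h4 a n hx⟩
  · intro a ha b hb hab
    have hsub1 : (⋂ b' ∈ Finset.range (m + 1), (q a b').1) ∩
        (⋂ a' ∈ Finset.range (m + 1), (q a' a).2) ⊆ (q a b).1 := fun x hx =>
      mem_iInter₂.mp hx.1 b (Finset.mem_range.mpr (Nat.lt_succ_of_le hb))
    have hsub2 : (⋂ b' ∈ Finset.range (m + 1), (q b b').1) ∩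
        (⋂ a' ∈ Finset.range (m + 1), (q a' b).2) ⊆ (q a b).2 := fun x hx =>
      mem_iInter₂.mp hx.2 a (Finset.mem_range.mpr (Nat.lt_succ_of_le ha))
    exact (h5 a b hab).mono hsub1 hsub2

end Aux

theorem stableFirstBaireClass_of_piecewiseContinuous
    {X Y : Type*} [TopologicalSpace X] [TopologicalSpace Y]
    [NormalSpace X] [PathConnectedSpace Y]
    (hY : SigmaAE X Y)
    (f : X → Y) (hf : PiecewiseContinuous f) :
    StableFirstBaireClass f := by
  classical
  obtain ⟨Yn, hYn, hYcover⟩ := hY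
  have hYne : ∀ n, (Yn n).Nonempty := fun n => (hYn n).1
  have hYcl : ∀ n, IsClosed (Yn n) := fun n => (hYn n).2.1
  have hYae : ∀ n, PairAE X (Yn n) := fun n => (hYn n).2.2.2
  obtain ⟨y₀⟩ : Nonempty Y := PathConnectedSpace.nonempty
  -- open approximations of the Gδ sets
  have hO : ∀ n, ∃ O : ℕ → Set Y, (∀ i, IsOpen (O i)) ∧ Yn n = ⋂ i, O i :=
    fun n => sbc_gdelta (hYn n).2.2.1
  choose O hOopen hOeq using hO
  -- an ℕ-indexed closed cover of X
  obtain ⟨Ck, hCcl, hCco, hCcov⟩ : ∃ Ck : ℕ → Set X, (∀ k, IsClosed (Ck k)) ∧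
      (∀ k, ContinuousOn f (Ck k)) ∧ (⋃ k, Ck k) = univ := by
    obtain ⟨C, hCc, h1, h2, h3⟩ := hf
    rcases C.eq_empty_or_nonempty with rfl | hne
    · refine ⟨fun _ => ∅, fun _ => isClosed_empty, fun _ => continuousOn_empty f, ?_⟩
      simp only [sUnion_empty] at h2
      simp [← h2]
    · obtain ⟨g, rfl⟩ := hCc.exists_eq_range hne
      exact ⟨g, fun k => h1 _ ⟨k, rfl⟩, fun k => h3 _ ⟨k, rfl⟩, by rw [← sUnion_range]; exact h2⟩
  -- the target sets in Y
  set T : ℕ → ℕ → Set Y := fun m n =>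
    Yn n ∩ ⋂ n' ∈ Finset.range n, ⋃ i ∈ Finset.range (m + 1), (O n' i)ᶜ with hT
  have hTcl : ∀ m n, IsClosed (T m n) := by
    intro m n
    refine (hYcl n).inter (isClosed_biInter fun n' _ => ?_)
    exact (Finset.range (m + 1)).finite_toSet.isClosed_biUnion
      fun i _ => (hOopen n' i).isClosed_compl
  -- the chunks: closed subsets of X on which f is continuous with values in a single Yn
  set chunk : ℕ → ℕ → Set X := fun m n =>
    ⋃ k ∈ Finset.range (m + 1), (Ck k ∩ f ⁻¹' (T m n)) with hchunk
  have hchcl : ∀ m n, IsClosed (chunk m n) := by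
    intro m n
    exact (Finset.range (m + 1)).finite_toSet.isClosed_biUnion fun k _ =>
      (hCco k).preimage_isClosed_of_isClosed (hCcl k) (hTcl m n)
  have hchco : ∀ m n, ContinuousOn f (chunk m n) := by
    intro m n
    exact sbc_biUnion _ (fun k => (hCco k).preimage_isClosed_of_isClosed (hCcl k) (hTcl m n))
      (fun k => (hCco k).mono inter_subset_left) (m + 1)
  have hchval : ∀ m n, ∀ x ∈ chunk m n, f x ∈ Yn n := by
    intro m n x hx
    obtain ⟨k, _, _, hfx⟩ := mem_iUnion₂.mp hx
    exact hfx.1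
  have hchdis : ∀ m, ∀ a b, a ≠ b → Disjoint (chunk m a) (chunk m b) := by
    intro m
    have key : ∀ a b, a < b → ∀ x, x ∈ chunk m a → x ∈ chunk m b → False := by
      intro a b hab x hxa hxb
      obtain ⟨k, _, _, hfxb⟩ := mem_iUnion₂.mp hxb
      have h2 : f x ∈ ⋃ i ∈ Finset.range (m + 1), (O a i)ᶜ :=
        mem_iInter₂.mp hfxb.2 a (Finset.mem_range.mpr hab)
      obtain ⟨i, _, hnot⟩ := mem_iUnion₂.mp h2
      have hfa : f x ∈ Yn a := hchval m a x hxa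
      exact hnot (by rw [hOeq a] at hfa; exact mem_iInter.mp hfa i)
    intro a b hab
    rcases hab.lt_or_gt with h | h
    · exact Set.disjoint_left.mpr fun x hxa hxb => key a b h x hxa hxb
    · exact Set.disjoint_left.mpr fun x hxa hxb => key b a h x hxb hxa
  -- the stage construction
  have stage : ∀ m, ∃ Fm : X → Y, Continuous Fm ∧
      ∀ n ≤ m, ∀ x ∈ chunk m n, Fm x = f x := by
    intro m
    obtain ⟨U, hUo, hUsub, hUdis⟩ := sbc_disjoint_opens (chunk m) (hchcl m) (hchdis m) m
    -- shrink the opens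
    have hV : ∀ n, ∃ V : Set X, IsOpen V ∧ chunk m n ⊆ V ∧ closure V ⊆ U n := by
      intro n
      have hdisj : Disjoint (chunk m n) (U n)ᶜ :=
        Set.disjoint_left.mpr fun x hx hc => hc (hUsub n hx)
      obtain ⟨V, W, hVo, hWo, hsV, hsW, hVW⟩ :=
        normal_separation (hchcl m n) (hUo n).isClosed_compl hdisj
      refine ⟨V, hVo, hsV, ?_⟩
      have h1 : closure V ⊆ Wᶜ :=
        closure_minimal (fun x hx hW => Set.disjoint_left.mp hVW hx hW) hWo.isClosed_compl
      intro x hx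
      by_contra h
      exact (h1 hx) (hsW h)
    choose V hVo hVsub hVcl using hV
    -- the extensions on each chunk
    have hG : ∀ n, ∃ G : X → Y, Continuous G ∧ (∀ x ∈ chunk m n, G x = f x) ∧
        (∀ x ∈ (V n)ᶜ, G x = y₀) := by
      intro n
      have hdisj : Disjoint (chunk m n) (V n)ᶜ :=
        Set.disjoint_left.mpr fun x hx hc => hc (hVsub n hx)
      exact sbc_ext (hYne n) (hYae n) (hchcl m n) (isClosed_compl_iff.mpr (hVo n)) hdisj
        (hchco m n) (hchval m n) y₀
    choose G hGc hGf hGy using hG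
    -- merge the extensions
    set M : ℕ → X → Y :=
      fun j => Nat.rec (motive := fun _ => X → Y) (fun _ => y₀)
        (fun n Mn => (V n).piecewise (G n) Mn) j with hM
    have hMsucc : ∀ n, M (n + 1) = (V n).piecewise (G n) (M n) := fun n => rfl
    have key : ∀ j, j ≤ m + 1 → Continuous (M j) ∧
        (∀ x, x ∉ (⋃ i ∈ Finset.range j, V i) → M j x = y₀) ∧
        (∀ i < j, ∀ x ∈ chunk m i, M j x = f x) := by
      intro j
      induction j with
      | zero => exact fun _ => ⟨continuous_const, fun x _ => rfl, fun i hi => absurd hi (by omega)⟩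
      | succ n ih =>
          intro hj
          have hnm : n ≤ m := by omega
          obtain ⟨ihc, ihy, ihf⟩ := ih (by omega)
          have hfr : ∀ a ∈ frontier (V n), G n a = M n a := by
            intro a ha
            rw [(hVo n).frontier_eq] at ha
            have haV : a ∉ V n := ha.2
            have hGa : G n a = y₀ := hGy n a haV
            have hMa : M n a = y₀ := by
              refine ihy a ?_
              intro hmem
              obtain ⟨i, hi, hai⟩ := mem_iUnion₂.mp hmem
              have hin : i < n := Finset.mem_range.mp hi
              have h1 : a ∈ U n := hVcl n ha.1
              have h2 : a ∈ U i := (hVcl i).trans (fun _ h => h) (subset_closure hai)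
              exact Set.disjoint_left.mp
                (hUdis i (by omega) n hnm (by omega)) h2 h1
            rw [hGa, hMa]
          refine ⟨?_, ?_, ?_⟩
          · rw [hMsucc n]
            exact Continuous.piecewise hfr (hGc n) ihc
          · intro x hx
            have hxn : x ∉ V n := by
              intro h
              exact hx (mem_iUnion₂.mpr ⟨n, Finset.mem_range.mpr (by omega), h⟩)
            rw [hMsucc n, Set.piecewise_eq_of_notMem _ _ _ hxn]
            refine ihy x ?_
            intro hmem
            obtain ⟨i, hi, hai⟩ := mem_iUnion₂.mp hmem
            exact hx (mem_iUnion₂.mpr ⟨i, Finset.mem_range.mpr (by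
              have := Finset.mem_range.mp hi; omega), hai⟩)
          · intro i hi x hxch
            by_cases h : i = n
            · subst h
              have hxV : x ∈ V i := hVsub i hxch
              rw [hMsucc i, Set.piecewise_eq_of_mem _ _ _ hxV]
              exact hGf i x hxch
            · have hi' : i < n := by omega
              have hxV : x ∉ V n := by
                intro hmem
                have h1 : x ∈ U i := (hVcl i) (subset_closure ((hVsub i) hxch))
                have h2 : x ∈ U n := (hVcl n) (subset_closure hmem)
                exact Set.disjoint_left.mp (hUdis i (by omega) n hnm (by omega)) h1 h2
              rw [hMsucc n, Set.piecewise_eq_of_notMem _ _ _ hxV]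
              exact ihf i hi' x hxch
    obtain ⟨hc, _, hfeq⟩ := key (m + 1) le_rfl
    exact ⟨M (m + 1), hc, fun n hn x hx => hfeq n (by omega) x hx⟩
  choose F hFc hFeq using stage
  refine ⟨F, hFc, ?_⟩
  intro x
  obtain ⟨k₀, hk₀⟩ := mem_iUnion.mp (hCcov ▸ mem_univ x : x ∈ ⋃ k, Ck k)
  have hnex : ∃ n, f x ∈ Yn n := mem_iUnion.mp (hYcover ▸ mem_univ (f x) : f x ∈ ⋃ n, Yn n)
  set n₀ := Nat.find hnex with hn₀def
  have hn₀ : f x ∈ Yn n₀ := Nat.find_spec hnex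
  have hlt : ∀ n' < n₀, f x ∉ Yn n' := fun n' h => Nat.find_min hnex h
  have hi : ∀ n', ∃ i, n' < n₀ → f x ∉ O n' i := by
    intro n'
    by_cases h : n' < n₀
    · have : f x ∉ Yn n' := hlt n' h
      rw [hOeq n'] at this
      obtain ⟨i, hi⟩ := by simpa [mem_iInter] using this
      exact ⟨i, fun _ => hi⟩
    · exact ⟨0, fun h' => absurd h' h⟩
  choose ii hii using hi
  set N := max (max k₀ n₀) ((Finset.range n₀).sup ii) with hN
  refine ⟨N, fun m hm => ?_⟩
  have hk₀m : k₀ ≤ m := le_trans (le_trans (le_max_left _ _) (le_max_left _ _)) hm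
  have hn₀m : n₀ ≤ m := le_trans (le_trans (le_max_right _ _) (le_max_left _ _)) hm
  have hmem : x ∈ chunk m n₀ := by
    refine mem_iUnion₂.mpr ⟨k₀, Finset.mem_range.mpr (by omega), hk₀, ?_⟩
    refine ⟨hn₀, mem_iInter₂.mpr fun n' hn' => ?_⟩
    have hn'lt : n' < n₀ := Finset.mem_range.mp hn'
    have hile : ii n' ≤ m := le_trans (le_trans (Finset.le_sup hn') (le_max_right _ _)) hm
    exact mem_iUnion₂.mpr ⟨ii n', Finset.mem_range.mpr (by omega), hii n' hn'lt⟩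
  exact hFeq m n₀ hn₀m x hmem
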